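/- Let H ∈ ℂ^{N_B × N_U}, let V ∈ ℂ^{N_U × d_s} satisfy Vᴴ V = I_{d_s} with HV of rank d_s, and let V^⊥ ∈ ℂ^{N_U × (N_U−d_s)} satisfy (V^⊥)ᴴ V^⊥ = I, (V^⊥)ᴴ V = 0, and V Vᴴ + V^⊥ (V^⊥)ᴴ = I_{N_U}. Let Π^⊥ := I_{N_B} − HV((HV)ᴴ HV)^{−1}(HV)ᴴ be the orthogonal projection onto the orthogonal complement of the column space of HV, and let Ω := (V^⊥)ᴴ Hᴴ Π^⊥ H V^⊥, a Hermitian positive semidefinite matrix with largest eigenvalue λ_1(Ω). Then for every V̂ ∈ ℂ^{N_U × d_s} with V̂ᴴ V̂ = I_{d_s}: Tr(V̂ᴴ Hᴴ Π^⊥ H V̂) ≤ λ_1(Ω) · (d_s − Tr(V Vᴴ V̂ V̂ᴴ)). -/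

import Mathlib

open Matrix
open scoped ComplexOrder

/-- The real part of the trace of a positive semidefinite matrix is nonnegative. -/
lemma trace_re_nonneg_of_posSemidef {n : ℕ} {A : Matrix (Fin n) (Fin n) ℂ}
    (h : A.PosSemidef) : 0 ≤ (Matrix.trace A).re := by
  have hdiag : ∀ i, 0 ≤ (A i i).re := by
    intro i
    have h0 := h.diag_nonneg (i := i)
    have : (0 : ℂ) ≤ A i i := by
      exact h0
    exact (Complex.le_def.mp this).1
  simpa [Matrix.trace, Matrix.diag, Complex.re_sum] using
    Finset.sum_nonneg fun i _ => hdiag i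

/-- Deterministic core of Proposition 3: the residual interference leaking past the
zero-forcing projection Π^⊥ (onto the orthogonal complement of the column space of H V)
is bounded by λ₁(Ω) times the squared chordal distance d_s − Tr(V Vᴴ V̂ V̂ᴴ). -/
theorem residual_interference_upper_bound (N_B N_U d_s : ℕ)
    (H : Matrix (Fin N_B) (Fin N_U) ℂ)
    (V : Matrix (Fin N_U) (Fin d_s) ℂ) (hV : Vᴴ * V = 1)
    (hrank : (H * V).rank = d_s)
    (Vp : Matrix (Fin N_U) (Fin (N_U - d_s)) ℂ)
    (hVp : Vpᴴ * Vp = 1) (hVpV : Vpᴴ * V = 0)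
    (hcomp : V * Vᴴ + Vp * Vpᴴ = 1)
    (Pi : Matrix (Fin N_B) (Fin N_B) ℂ)
    (hPi : Pi = 1 - H * V * ((H * V)ᴴ * (H * V))⁻¹ * (H * V)ᴴ)
    (Omega : Matrix (Fin (N_U - d_s)) (Fin (N_U - d_s)) ℂ)
    (hOmega : Omega = Vpᴴ * Hᴴ * Pi * H * Vp)
    (hHerm : Omega.IsHermitian) (hpsd : Omega.PosSemidef)
    (lam : ℝ) (hub : ∀ i, hHerm.eigenvalues i ≤ lam)
    (hmem : ∃ i, hHerm.eigenvalues i = lam) :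
    ∀ Vhat : Matrix (Fin N_U) (Fin d_s) ℂ, Vhatᴴ * Vhat = 1 →
      (Matrix.trace (Vhatᴴ * Hᴴ * Pi * H * Vhat)).re ≤
        lam * ((d_s : ℝ) - (Matrix.trace (V * Vᴴ * Vhat * Vhatᴴ)).re) := by
  intro Vhat hVhat
  classical
  set G := H * V with hG
  set M := Gᴴ * G with hM
  -- M is invertible
  have hrankM : M.rank = d_s := by
    rw [hM, Matrix.rank_conjTranspose_mul_self, ← hG] at *
    exact hrank
  have hMunit : IsUnit M := by
    rw [← Matrix.mulVec_surjective_iff_isUnit]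
    have htop : LinearMap.range M.mulVecLin = ⊤ := by
      apply Submodule.eq_top_of_finrank_eq
      rw [show Module.finrank ℂ (LinearMap.range M.mulVecLin) = M.rank from rfl, hrankM]
      simp [Module.finrank_fintype_fun_eq_card]
    intro v
    obtain ⟨w, hw⟩ := (LinearMap.range_eq_top.mp htop) v
    exact ⟨w, by simpa [Matrix.mulVecLin_apply] using hw⟩
  have hMinvM : M⁻¹ * M = 1 :=
    Matrix.nonsing_inv_mul M ((Matrix.isUnit_iff_isUnit_det M).mp hMunit)
  -- Pi kills G
  have hPiG : Pi * G = 0 := by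
    rw [hPi]
    have h1 : (1 - G * M⁻¹ * Gᴴ) * G = G - G * M⁻¹ * (Gᴴ * G) := by
      rw [Matrix.sub_mul, Matrix.one_mul, Matrix.mul_assoc]
    rw [h1, ← hM, Matrix.mul_assoc, hMinvM, Matrix.mul_one, sub_self]
  -- Pi is Hermitian
  have hMH : Mᴴ = M := by rw [hM]; simp [Matrix.conjTranspose_mul]
  have hPiH : Piᴴ = Pi := by
    rw [hPi]
    simp only [conjTranspose_sub, conjTranspose_one, conjTranspose_mul,
      conjTranspose_conjTranspose, Matrix.conjTranspose_nonsing_inv, hMH]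
    simp [hG, Matrix.mul_assoc]
  set P := Hᴴ * Pi * H with hP
  have hPV : P * V = 0 := by
    rw [hP]
    calc Hᴴ * Pi * H * V = Hᴴ * (Pi * G) := by rw [hG, Matrix.mul_assoc, Matrix.mul_assoc]
    _ = 0 := by rw [hPiG, Matrix.mul_zero]
  have hPH : Pᴴ = P := by
    rw [hP]
    simp [Matrix.conjTranspose_mul, hPiH, Matrix.mul_assoc]
  have hVP : Vᴴ * P = 0 := by
    have := congrArg Matrix.conjTranspose hPV
    simpa [Matrix.conjTranspose_mul, hPH] using this
  -- decomposition of Vhat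
  set A := Vᴴ * Vhat with hA
  set B := Vpᴴ * Vhat with hB
  have hdecomp : V * A + Vp * B = Vhat := by
    rw [hA, hB, ← Matrix.mul_assoc, ← Matrix.mul_assoc, ← Matrix.add_mul, hcomp,
      Matrix.one_mul]
  -- Omega in terms of P
  have hOmegaP : Omega = Vpᴴ * P * Vp := by
    rw [hOmega, hP]; simp only [Matrix.mul_assoc]
  -- key identity
  have key : Vhatᴴ * Hᴴ * Pi * H * Vhat = Bᴴ * Omega * B := by
    have h1 : Vhatᴴ * Hᴴ * Pi * H * Vhat = Vhatᴴ * P * Vhat := by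
      rw [hP]; simp only [Matrix.mul_assoc]
    have hPVA : P * (V * A) = 0 := by rw [← Matrix.mul_assoc, hPV, Matrix.zero_mul]
    have t1 : Aᴴ * Vᴴ * P = 0 := by rw [Matrix.mul_assoc, hVP, Matrix.mul_zero]
    rw [h1, hOmegaP]
    conv_lhs => rw [← hdecomp]
    simp only [conjTranspose_add, conjTranspose_mul, Matrix.add_mul, Matrix.mul_add]
    rw [t1, Matrix.zero_mul, Matrix.zero_mul,
      Matrix.mul_assoc (Bᴴ * Vpᴴ) P (V * A), hPVA, Matrix.mul_zero]
    simp only [Matrix.mul_assoc, zero_add, add_zero]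
  -- lam • 1 - Omega is PSD
  have hC : ((lam : ℂ) • (1 : Matrix (Fin (N_U - d_s)) (Fin (N_U - d_s)) ℂ)
      - Omega).PosSemidef := by
    have hU := (Matrix.mem_unitaryGroup_iff).mp (hHerm.eigenvectorUnitary).2
    have hspec := hHerm.spectral_theorem
    set U := (hHerm.eigenvectorUnitary : Matrix (Fin (N_U - d_s)) (Fin (N_U - d_s)) ℂ)
    have hdiagPSD : (Matrix.diagonal
        (fun i => ((lam - hHerm.eigenvalues i : ℝ) : ℂ))).PosSemidef := by
      refine Matrix.PosSemidef.diagonal fun i => ?_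
      rw [Complex.le_def]
      constructor
      · simpa using sub_nonneg.mpr (hub i)
      · simp
    have hform : (lam : ℂ) • (1 : Matrix (Fin (N_U - d_s)) (Fin (N_U - d_s)) ℂ) - Omega
        = U * (Matrix.diagonal (fun i => ((lam - hHerm.eigenvalues i : ℝ) : ℂ))) * star U := by
      have hd : Matrix.diagonal (fun i => ((lam - hHerm.eigenvalues i : ℝ) : ℂ))
          = (lam : ℂ) • (1 : Matrix (Fin (N_U - d_s)) (Fin (N_U - d_s)) ℂ)
            - Matrix.diagonal (RCLike.ofReal ∘ hHerm.eigenvalues) := by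
        ext i j
        rcases eq_or_ne i j with rfl | h
        · simp [Matrix.one_apply, Function.comp, Complex.ofReal_sub, mul_comm]
        · simp [Matrix.diagonal_apply_ne _ h, Matrix.one_apply_ne h]
      rw [hd, Matrix.mul_sub, Matrix.sub_mul]
      have e1 : U * ((lam : ℂ) • (1 : Matrix (Fin (N_U - d_s)) (Fin (N_U - d_s)) ℂ)) * star U
          = (lam : ℂ) • (1 : Matrix (Fin (N_U - d_s)) (Fin (N_U - d_s)) ℂ) := by
        rw [Matrix.mul_smul, Matrix.mul_one, Matrix.smul_mul, hU]
      rw [e1]; exact congrArg _ hspec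
    rw [hform]
    exact hdiagPSD.mul_mul_conjTranspose_same U
  -- trace inequality
  have hBpsd : (Bᴴ * ((lam : ℂ) • (1 : Matrix (Fin (N_U - d_s)) (Fin (N_U - d_s)) ℂ)
      - Omega) * B).PosSemidef := hC.conjTranspose_mul_mul_same B
  have htr : 0 ≤ (Matrix.trace (Bᴴ * ((lam : ℂ) • (1 : Matrix (Fin (N_U - d_s)) (Fin (N_U - d_s)) ℂ)
      - Omega) * B)).re := trace_re_nonneg_of_posSemidef hBpsd
  have hexpand : Bᴴ * ((lam : ℂ) • (1 : Matrix (Fin (N_U - d_s)) (Fin (N_U - d_s)) ℂ)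
      - Omega) * B = (lam : ℂ) • (Bᴴ * B) - Bᴴ * Omega * B := by
    rw [Matrix.mul_sub, Matrix.sub_mul]
    congr 1
    rw [Matrix.mul_smul, Matrix.mul_one, Matrix.smul_mul]
  rw [hexpand, Matrix.trace_sub, Matrix.trace_smul, smul_eq_mul] at htr
  have hineq : (Matrix.trace (Bᴴ * Omega * B)).re ≤ lam * (Matrix.trace (Bᴴ * B)).re := by
    have hre : 0 ≤ lam * (Matrix.trace (Bᴴ * B)).re - (Matrix.trace (Bᴴ * Omega * B)).re := by
      simpa [Complex.sub_re, Complex.mul_re] using htr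
    linarith
  -- compute trace (Bᴴ * B)
  have htrB : Matrix.trace (Bᴴ * B)
      = (d_s : ℂ) - Matrix.trace (V * Vᴴ * Vhat * Vhatᴴ) := by
    have h1 : Bᴴ * B = Vhatᴴ * (Vp * Vpᴴ) * Vhat := by
      rw [hB]; simp [Matrix.conjTranspose_mul, Matrix.mul_assoc]
    have h2 : Vp * Vpᴴ = 1 - V * Vᴴ := by
      rw [← hcomp]; exact (add_sub_cancel_left _ _).symm
    rw [h1, h2]
    rw [Matrix.mul_sub, Matrix.mul_one, Matrix.sub_mul, Matrix.trace_sub]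
    congr 1
    · rw [hVhat, Matrix.trace_one]; simp
    · rw [Matrix.trace_mul_cycle, Matrix.trace_mul_comm]
      simp only [Matrix.mul_assoc]
  -- finish
  rw [key]
  calc (Matrix.trace (Bᴴ * Omega * B)).re
      ≤ lam * (Matrix.trace (Bᴴ * B)).re := hineq
    _ = lam * ((d_s : ℝ) - (Matrix.trace (V * Vᴴ * Vhat * Vhatᴴ)).re) := by
        rw [htrB]; simp [Complex.sub_re]
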